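/- arXiv:2005.04781 — 3 statements merged into one kernel-verified Lean document; each statement's English description precedes it below -/
import Mathlib

section
/- Let f be in the class WRPB and suppose W_f(ω) = ε √(p*)^{m+s} ζ_p^{f*(ω)} for some ω in the Walsh support S_f. Then for every nonzero z ∈ F_p, zω ∈ S_f whenever ω ∈ S_f, and zω ∉ S_f whenever ω ∉ S_f. -/
open scoped BigOperators Classical

noncomputable section

/-- The primitive `p`-th root of unity `ζ_p = exp(2πi/p)` in `ℂ`. -/
def zetaC (p : ℕ) : ℂ := Complex.exp (2 * Real.pi * Complex.I / p)

/-- The additive character `a ↦ ζ_p^a` of `ZMod p` with values in `ℂ`. -/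
def chi (p : ℕ) (a : ZMod p) : ℂ := zetaC p ^ a.val

section Aux
open Polynomial Finset

variable (p : ℕ) [Fact p.Prime]

lemma zeta_primitive : IsPrimitiveRoot (zetaC p) p :=
  Complex.isPrimitiveRoot_exp p (Fact.out : p.Prime).ne_zero

lemma sum_zmod_eq_range {M : Type*} [AddCommMonoid M] (g : ℕ → M) :
    ∑ u : ZMod p, g u.val = ∑ i ∈ Finset.range p, g i := by
  haveI : NeZero p := ⟨(Fact.out : p.Prime).ne_zero⟩
  refine Finset.sum_nbij' (fun u => u.val) (fun i => (i : ZMod p)) ?_ ?_ ?_ ?_ ?_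
  · intro u _; exact Finset.mem_range.2 (ZMod.val_lt u)
  · intros; exact Finset.mem_univ _
  · intro u _; exact ZMod.natCast_rightInverse u
  · intro i hi; exact ZMod.val_natCast_of_lt (Finset.mem_range.1 hi)
  · intros; rfl

lemma sum_chi_eq_zero : ∑ u : ZMod p, chi p u = 0 := by
  show ∑ u : ZMod p, zetaC p ^ u.val = 0
  rw [sum_zmod_eq_range p (fun i => zetaC p ^ i)]
  exact (zeta_primitive p).geom_sum_eq_zero (Fact.out : p.Prime).one_lt

lemma counts_const (N : ZMod p → ℕ)
    (h : ∑ u : ZMod p, (N u : ℂ) * chi p u = 0) (u v : ZMod p) : N u = N v := by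
  have hp : p.Prime := Fact.out
  haveI : NeZero p := ⟨hp.ne_zero⟩
  have hζ := zeta_primitive p
  set P : Polynomial ℚ := ∑ w : ZMod p, Polynomial.C (N w : ℚ) * Polynomial.X ^ w.val with hP
  have hcoeff : ∀ w : ZMod p, P.coeff w.val = (N w : ℚ) := by
    intro w
    rw [hP, Polynomial.finset_sum_coeff]
    rw [Finset.sum_eq_single w]
    · simp [Polynomial.coeff_C_mul, Polynomial.coeff_X_pow]
    · intro b _ hb
      have hne : w.val ≠ b.val := fun e => hb (ZMod.val_injective p e.symm)
      simp [Polynomial.coeff_C_mul, Polynomial.coeff_X_pow, hne]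
    · intro hw; exact absurd (Finset.mem_univ w) hw
  have haeval : Polynomial.aeval (zetaC p) P = 0 := by
    rw [hP]
    simp only [map_sum, map_mul, Polynomial.aeval_C, map_pow, Polynomial.aeval_X]
    simpa [chi] using h
  have hdvd : Polynomial.cyclotomic p ℚ ∣ P := by
    rw [Polynomial.cyclotomic_eq_minpoly_rat hζ hp.pos]
    exact minpoly.dvd ℚ _ haeval
  obtain ⟨q, hq⟩ := hdvd
  by_cases hq0 : q = 0
  · have hP0 : P = 0 := by rw [hq, hq0, mul_zero]
    have h1 := hcoeff u; have h2 := hcoeff v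
    rw [hP0] at h1 h2
    simp only [Polynomial.coeff_zero] at h1 h2
    exact_mod_cast h1.symm.trans h2
  · have hdegP : P.natDegree ≤ p - 1 := by
      apply Polynomial.natDegree_sum_le_of_forall_le
      intro w _
      refine le_trans (Polynomial.natDegree_C_mul_le _ _) ?_
      rw [Polynomial.natDegree_X_pow]
      exact Nat.le_pred_of_lt (ZMod.val_lt w)
    have hdegC : (Polynomial.cyclotomic p ℚ).natDegree = p - 1 := by
      rw [Polynomial.natDegree_cyclotomic, Nat.totient_prime hp]
    have hmul : P.natDegree = (Polynomial.cyclotomic p ℚ).natDegree + q.natDegree := by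
      rw [hq]; exact Polynomial.natDegree_mul (Polynomial.cyclotomic_ne_zero p ℚ) hq0
    have hqdeg : q.natDegree = 0 := by omega
    obtain ⟨r, hr⟩ := Polynomial.natDegree_eq_zero.1 hqdeg
    have hc : ∀ w : ZMod p, (N w : ℚ) = r := by
      intro w
      rw [← hcoeff w, hq, ← hr, Polynomial.coeff_mul_C, Polynomial.cyclotomic_prime,
        Polynomial.finset_sum_coeff]
      simp [Polynomial.coeff_X_pow, ZMod.val_lt w]
    have h1 := hc u; have h2 := hc v
    exact_mod_cast h1.trans h2.symm

end Aux


/-- The principal square root of `p* = η₀(-1)·p`:  `√p` if `p ≡ 1 (mod 4)`,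
and `i·√p` if `p ≡ 3 (mod 4)`. -/
def sqrtPstar (p : ℕ) : ℂ :=
  if p % 4 = 1 then (Real.sqrt p : ℂ) else Complex.I * (Real.sqrt p : ℂ)

/-- The Walsh transform `W_f(ω) = ∑_x ζ_p^{f(x) - Tr(ωx)}` of `f : F → ZMod p`,
where `F` is a finite field of characteristic `p` and `Tr` is the trace to `ZMod p`. -/
def walsh (p : ℕ) {F : Type} [Field F] [Fintype F] [Algebra (ZMod p) F]
    (f : F → ZMod p) (ω : F) : ℂ :=
  ∑ x : F, chi p (f x - Algebra.trace (ZMod p) F (ω * x))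

/-- `f` is a weakly regular `s`-plateaued *balanced* function in the class WRPB:
balanced, `f(0)=0`, homogeneous of even degree `t` with `gcd(t-1,p-1)=1`,
and weakly regular with sign `ε` and dual function `fstar` on the Walsh support. -/
structure IsWRPB (p m s : ℕ) {F : Type} [Field F] [Fintype F] [Algebra (ZMod p) F]
    (f : F → ZMod p) (ε : ℤ) (fstar : F → ZMod p) : Prop where
  card_eq : Fintype.card F = p ^ m
  plateaued : ∀ ω : F, ‖walsh p f ω‖ ^ 2 = 0 ∨
      ‖walsh p f ω‖ ^ 2 = (p : ℝ) ^ (m + s)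
  balanced : walsh p f 0 = 0
  map_zero : f 0 = 0
  homog : ∃ t : ℕ, Even t ∧ 0 < t ∧ Nat.gcd (t - 1) (p - 1) = 1 ∧
      ∀ a : ZMod p, a ≠ 0 → ∀ x : F, f (algebraMap (ZMod p) F a * x) = a ^ t * f x
  sign : ε = 1 ∨ ε = -1
  weakly_regular : ∀ ω : F, ‖walsh p f ω‖ ^ 2 = (p : ℝ) ^ (m + s) →
      walsh p f ω = (ε : ℂ) * sqrtPstar p ^ (m + s) * chi p (fstar ω)
  fstar_eq_zero : ∀ ω : F, ‖walsh p f ω‖ ^ 2 ≠ (p : ℝ) ^ (m + s) → fstar ω = 0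

section Main
open Finset

lemma pow_surj_zmod (p : ℕ) [Fact p.Prime] (t : ℕ) (hcop : Nat.gcd (t - 1) (p - 1) = 1)
    (z : ZMod p) (hz : z ≠ 0) : ∃ a : ZMod p, a ≠ 0 ∧ a ^ (t - 1) = z := by
  have hp : p.Prime := Fact.out
  have hcard : Nat.card (ZMod p)ˣ = p - 1 := by
    rw [Nat.card_eq_fintype_card, ZMod.card_units_eq_totient, Nat.totient_prime hp]
  have hco : (Nat.card (ZMod p)ˣ).Coprime (t - 1) := by
    rw [hcard, Nat.coprime_comm]; exact hcop
  obtain ⟨au, hau⟩ := (powCoprime hco).surjective (Units.mk0 z hz)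
  refine ⟨(au : ZMod p), au.ne_zero, ?_⟩
  have : ((au ^ (t - 1) : (ZMod p)ˣ) : ZMod p) = z := by
    rw [show au ^ (t-1) = Units.mk0 z hz from hau]; rfl
  simpa using this

lemma walsh_mul_eq_zero (p : ℕ) [Fact p.Prime] {F : Type} [Field F] [Fintype F]
    [Algebra (ZMod p) F] (f : F → ZMod p) (t : ℕ) (ht : 0 < t)
    (hcop : Nat.gcd (t - 1) (p - 1) = 1)
    (hhom : ∀ a : ZMod p, a ≠ 0 → ∀ x : F, f (algebraMap (ZMod p) F a * x) = a ^ t * f x)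
    (z : ZMod p) (hz : z ≠ 0) (ω : F) (h0 : walsh p f ω = 0) :
    walsh p f (algebraMap (ZMod p) F z * ω) = 0 := by
  obtain ⟨a, ha, hat⟩ := pow_surj_zmod p t hcop z hz
  set g : F → ZMod p := fun x => f x - Algebra.trace (ZMod p) F (ω * x) with hg
  set N : ZMod p → ℕ := fun u => (Finset.univ.filter (fun x => g x = u)).card with hN
  have hfib : ∀ c : ZMod p, ∑ x : F, chi p (c * g x) = ∑ u : ZMod p, (N u : ℂ) * chi p (c * u) := by
    intro c
    rw [← Finset.sum_fiberwise_of_maps_to (fun x _ => Finset.mem_univ (g x))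
      (fun x => chi p (c * g x))]
    refine Finset.sum_congr rfl fun u _ => ?_
    rw [Finset.sum_congr rfl (fun x hx => by rw [(Finset.mem_filter.1 hx).2]),
      Finset.sum_const, nsmul_eq_mul]
  have hza : z * a = a ^ t := by
    rw [← hat, ← pow_succ, Nat.sub_add_cancel ht]
  have hmapa : algebraMap (ZMod p) F a ≠ 0 := fun h =>
    ha ((algebraMap (ZMod p) F).injective (by rw [h, map_zero]))
  have key : walsh p f (algebraMap (ZMod p) F z * ω) = ∑ x : F, chi p (a ^ t * g x) := by
    rw [walsh, ← Equiv.sum_comp (Equiv.mulLeft₀ (algebraMap (ZMod p) F a) hmapa)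
      (fun x => chi p (f x - Algebra.trace (ZMod p) F (algebraMap (ZMod p) F z * ω * x)))]
    refine Finset.sum_congr rfl fun x _ => ?_
    have h2 : algebraMap (ZMod p) F z * ω * (Equiv.mulLeft₀ (algebraMap (ZMod p) F a) hmapa x)
        = (z * a) • (ω * x) := by
      rw [Algebra.smul_def, map_mul]
      show algebraMap (ZMod p) F z * ω * (algebraMap (ZMod p) F a * x) = _
      ring
    have h1 : f (Equiv.mulLeft₀ (algebraMap (ZMod p) F a) hmapa x) = a ^ t * f x := hhom a ha x
    congr 1
    rw [h1, h2, map_smul, smul_eq_mul, hza, hg]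
    ring
  rw [key, hfib (a ^ t)]
  have hNconst : ∀ u : ZMod p, N u = N 0 := by
    refine fun u => counts_const p N ?_ u 0
    have h1 := hfib 1
    simp only [one_mul] at h1
    rw [← h1]
    exact h0
  have hc : (a : ZMod p) ^ t ≠ 0 := pow_ne_zero _ ha
  calc ∑ u : ZMod p, (N u : ℂ) * chi p (a ^ t * u)
      = (N 0 : ℂ) * ∑ u : ZMod p, chi p (a ^ t * u) := by
        rw [Finset.mul_sum]
        exact Finset.sum_congr rfl fun u _ => by rw [hNconst u]
    _ = 0 := by
        have he : ∑ u : ZMod p, chi p (a ^ t * u) = ∑ u : ZMod p, chi p u :=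
          Equiv.sum_comp (Equiv.mulLeft₀ (a ^ t) hc) (chi p)
        rw [he, sum_chi_eq_zero, mul_zero]

end Main

/-- For `f ∈ WRPB` and nonzero `z ∈ F_p`, `zω` lies in the Walsh support `S_f`
whenever `ω` does, and lies outside `S_f` whenever `ω` does. -/
theorem stmt1 (p m s : ℕ) [Fact p.Prime] (hodd : Odd p) (hm : 0 < m)
    (F : Type) [Field F] [Fintype F] [Algebra (ZMod p) F]
    (f : F → ZMod p) (ε : ℤ) (fstar : F → ZMod p)
    (hf : IsWRPB p m s f ε fstar) :
    ∀ z : ZMod p, z ≠ 0 → ∀ ω : F,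
      (‖walsh p f ω‖ ^ 2 = (p : ℝ) ^ (m + s) →
        ‖walsh p f (algebraMap (ZMod p) F z * ω)‖ ^ 2 = (p : ℝ) ^ (m + s)) ∧
      (‖walsh p f ω‖ ^ 2 ≠ (p : ℝ) ^ (m + s) →
        ‖walsh p f (algebraMap (ZMod p) F z * ω)‖ ^ 2 ≠ (p : ℝ) ^ (m + s)) := by

  have hp : p.Prime := Fact.out
  obtain ⟨t, _hteven, htpos, hcop, hhom⟩ := hf.homog
  have hps : (0:ℝ) < (p : ℝ) ^ (m + s) := pow_pos (by exact_mod_cast hp.pos) _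
  have main : ∀ z : ZMod p, z ≠ 0 → ∀ ω : F, walsh p f ω = 0 →
      walsh p f (algebraMap (ZMod p) F z * ω) = 0 :=
    fun z hz ω h0 => walsh_mul_eq_zero p f t htpos hcop hhom z hz ω h0
  have absiff : ∀ ω' : F, ‖walsh p f ω'‖ ^ 2 = 0 ↔ walsh p f ω' = 0 := by
    intro ω'
    rw [pow_eq_zero_iff (two_ne_zero), norm_eq_zero]
  intro z hz ω
  constructor
  · intro h1
    rcases hf.plateaued (algebraMap (ZMod p) F z * ω) with h | h
    · exfalso
      have h2 : walsh p f (algebraMap (ZMod p) F z * ω) = 0 := (absiff _).1 h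
      have h3 : walsh p f ω = 0 := by
        have := main z⁻¹ (inv_ne_zero hz) (algebraMap (ZMod p) F z * ω) h2
        rwa [← mul_assoc, ← map_mul, inv_mul_cancel₀ hz, map_one, one_mul] at this
      rw [h3] at h1
      simp only [map_zero, norm_zero, ne_eq, OfNat.ofNat_ne_zero, not_false_eq_true, zero_pow] at h1
      exact hps.ne h1
    · exact h
  · intro h1
    rcases hf.plateaued ω with h | h
    · have h2 := main z hz ω ((absiff ω).1 h)
      rw [(absiff _).2 h2]
      exact hps.ne
    · exact absurd h h1
end
end

section
/- Let f ∈ WRPB and for ω ∈ F_{p^m}^* define N_sq(ω) = #{x : f(x) ∈ SQ and Tr^m(ωx) = 0}. Then N_sq(ω) = (p−1)p^{m−2}/2 if ω ∉ S_f. If ω ∈ S_f and m+s is even: N_sq(ω) = ½(p−1)(p^{m−2} − ε(p−1)√(p*)^{m+s−4}) when f*(ω) = 0 or f*(ω) ∈ NSQ, and N_sq(ω) = ½(p−1)(p^{m−2} + ε(p+1)√(p*)^{m+s−4}) when f*(ω) ∈ SQ. -/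
open scoped BigOperators Classical

noncomputable section

namespace Stmt9Aux

variable (p : ℕ) [hp : Fact p.Prime]

lemma zeta_prim : IsPrimitiveRoot (zetaC p) p :=
  Complex.isPrimitiveRoot_exp p hp.out.ne_zero

lemma zeta_pow_p : zetaC p ^ p = 1 := (zeta_prim p).pow_eq_one

lemma chi_eq (a : ZMod p) (n : ℕ) (h : (n : ZMod p) = a) : chi p a = zetaC p ^ n := by
  have : a.val = n % p := by
    haveI : NeZero p := ⟨hp.out.ne_zero⟩
    rw [← h, ZMod.val_natCast]
  rw [chi, this, ← pow_eq_pow_mod n (zeta_pow_p p)]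

lemma chi_zero : chi p 0 = 1 := by
  rw [chi_eq p 0 0 (by simp)]; simp

lemma chi_add (a b : ZMod p) : chi p (a + b) = chi p a * chi p b := by
  rw [chi_eq p (a + b) (a.val + b.val) (by push_cast [ZMod.natCast_val, ZMod.cast_id]; ring),
    pow_add, chi, chi]

lemma chi_ne_one {a : ZMod p} (ha : a ≠ 0) : chi p a ≠ 1 := by
  have h1 : 0 < a.val := by
    haveI : NeZero p := ⟨hp.out.ne_zero⟩
    exact Nat.pos_of_ne_zero fun h => ha (by rwa [← ZMod.val_eq_zero])
  exact (zeta_prim p).pow_ne_one_of_pos_of_lt h1.ne' (ZMod.val_lt a)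

/-- shift trick -/
lemma sum_eq_zero_of_shift {G : Type*} [AddCommGroup G] [Fintype G] (φ : G → ℂ) (x₀ : G)
    (h : ∀ x, φ (x + x₀) = φ x₀ * φ x) (h1 : φ x₀ ≠ 1) : ∑ x, φ x = 0 := by
  have key : ∑ x, φ x = φ x₀ * ∑ x, φ x := by
    rw [Finset.mul_sum]
    exact (Fintype.sum_equiv (Equiv.addRight x₀) _ _ (fun x => (h x).symm)).symm
  by_contra hS
  exact h1 ((mul_left_cancel₀ hS (by rw [mul_one, mul_comm, ← key])).symm)

lemma chi_sum (c : ZMod p) : ∑ a : ZMod p, chi p (a * c) = if c = 0 then (p : ℂ) else 0 := by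
  split_ifs with h
  · subst h; simp [chi_zero]
  · refine sum_eq_zero_of_shift (fun a => chi p (a * c)) 1 (fun x => ?_) (by simpa using chi_ne_one p h)
    show chi p ((x + 1) * c) = chi p (1 * c) * chi p (x * c)
    rw [add_mul, one_mul, chi_add, mul_comm]

end Stmt9Aux
namespace Stmt9Aux
open Polynomial
variable (p : ℕ) [hp : Fact p.Prime]

/-- reindex sum over ZMod p as sum over range p -/
lemma sum_zmod_eq_range (g : ZMod p → ℂ) :
    ∑ k : ZMod p, g k = ∑ i ∈ Finset.range p, g (i : ZMod p) := by
  haveI : NeZero p := ⟨hp.out.ne_zero⟩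
  refine Finset.sum_nbij' (fun k => k.val) (fun i => (i : ZMod p)) ?_ ?_ ?_ ?_ ?_
  · intro a _; exact Finset.mem_range.mpr (ZMod.val_lt a)
  · intro a _; exact Finset.mem_univ _
  · intro a _; exact ZMod.natCast_rightInverse a
  · intro a ha; exact ZMod.val_cast_of_lt (Finset.mem_range.mp ha)
  · intro a _; rw [ZMod.natCast_rightInverse a]

/-- key linear independence lemma -/
lemma eq_of_sum_chi_eq_zero (e : ZMod p → ℤ)
    (h : ∑ k : ZMod p, (e k : ℂ) * chi p k = 0) : ∀ k, e k = e 0 := by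
  haveI : NeZero p := ⟨hp.out.ne_zero⟩
  have hζ := zeta_prim p
  set ζ := zetaC p with hζdef
  -- the rational polynomial
  set Q : ℚ[X] := ∑ i ∈ Finset.range p, monomial i ((e (i : ZMod p) - e 0 : ℤ) : ℚ) with hQ
  have haev : aeval ζ Q = 0 := by
    rw [hQ, map_sum]
    have h2 : ∑ k : ZMod p, ((e k - e 0 : ℤ) : ℂ) * chi p k = 0 := by
      have h3 : ∑ k : ZMod p, ((e 0 : ℤ) : ℂ) * chi p k = 0 := by
        rw [← Finset.mul_sum]
        have := chi_sum p 1
        simp only [mul_one] at this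
        rw [this]; simp [hp.out.one_lt.ne']
      calc ∑ k : ZMod p, ((e k - e 0 : ℤ) : ℂ) * chi p k
          = ∑ k : ZMod p, ((e k : ℂ) * chi p k - (e 0 : ℂ) * chi p k) := by
            apply Finset.sum_congr rfl; intro k _; push_cast; ring
        _ = 0 := by rw [Finset.sum_sub_distrib, h, h3, sub_zero]
    rw [sum_zmod_eq_range p (fun k => ((e k - e 0 : ℤ) : ℂ) * chi p k)] at h2
    calc ∑ i ∈ Finset.range p, aeval ζ (monomial i ((e (i : ZMod p) - e 0 : ℤ) : ℚ))
        = ∑ i ∈ Finset.range p, ((e (i : ZMod p) - e 0 : ℤ) : ℂ) * ζ ^ i := by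
          apply Finset.sum_congr rfl; intro i hi
          rw [aeval_monomial, map_intCast]
      _ = 0 := by
          rw [← h2]; apply Finset.sum_congr rfl; intro i hi
          rw [chi_eq p (i : ZMod p) i rfl]
  have hdvd : cyclotomic p ℚ ∣ Q := by
    rw [cyclotomic_eq_minpoly_rat hζ hp.out.pos]
    exact minpoly.dvd ℚ ζ haev
  have hQ0 : Q = 0 := by
    by_contra hne
    obtain ⟨R, hR⟩ := hdvd
    have hRne : R ≠ 0 := by rintro rfl; simp at hR; exact hne hR
    have hcycne : cyclotomic p ℚ ≠ 0 := cyclotomic_ne_zero p ℚ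
    have hdegQ : Q.natDegree ≤ p - 1 := by
      rw [hQ]
      refine (natDegree_sum_le _ _).trans ?_
      simp only [Finset.fold_max_le]
      constructor
      · omega
      · intro i hi
        exact (natDegree_monomial_le _).trans (by
          have := Finset.mem_range.mp hi; omega)
    have hdegc : (cyclotomic p ℚ).natDegree = p - 1 := by
      rw [natDegree_cyclotomic, Nat.totient_prime hp.out]
    have hdegR : R.natDegree = 0 := by
      have := natDegree_mul hcycne hRne
      rw [← hR] at this
      omega
    obtain ⟨c, rfl⟩ := natDegree_eq_zero.mp hdegR
    have hc0 : Q.coeff 0 = (cyclotomic p ℚ).coeff 0 * c := by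
      rw [hR, mul_comm, coeff_C_mul]
      ring
    have hcyc0 : (cyclotomic p ℚ).coeff 0 = 1 := by
      rw [cyclotomic_prime]
      simp [coeff_X_pow, Finset.sum_ite_eq', hp.out.pos]
    have hQc0 : Q.coeff 0 = 0 := by
      rw [hQ, finset_sum_coeff]
      simp only [coeff_monomial]
      rw [Finset.sum_ite_eq' (Finset.range p) 0]
      simp [hp.out.pos]
    rw [hQc0, hcyc0, one_mul] at hc0
    rw [← hc0] at hR
    simp at hR
    exact hne hR
  intro k
  have hco : Q.coeff k.val = ((e ((k.val : ℕ) : ZMod p) - e 0 : ℤ) : ℚ) := by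
    rw [hQ, finset_sum_coeff]
    simp only [coeff_monomial]
    rw [Finset.sum_ite_eq' (Finset.range p) k.val]
    simp [ZMod.val_lt k]
  rw [hQ0, coeff_zero] at hco
  rw [ZMod.natCast_rightInverse k] at hco
  have : ((e k - e 0 : ℤ) : ℚ) = 0 := hco.symm
  exact_mod_cast sub_eq_zero.mp (by exact_mod_cast this)

end Stmt9Aux
namespace Stmt9Aux
variable (p : ℕ) [hp : Fact p.Prime]

section TraceSum
variable {F : Type} [Field F] [Fintype F] [Algebra (ZMod p) F]

lemma trace_char_sum (ω : F) (hω : ω ≠ 0) :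
    ∑ x : F, chi p (Algebra.trace (ZMod p) F (ω * x)) = 0 := by
  obtain ⟨x₀, hx₀⟩ : ∃ b, Algebra.trace (ZMod p) F (ω * b) ≠ 0 := by
    by_contra hcon
    push_neg at hcon
    refine hω ((traceForm_nondegenerate (ZMod p) F).1 ω (fun n => ?_))
    rw [Algebra.traceForm_apply]
    exact hcon n
  refine sum_eq_zero_of_shift (fun x => chi p (Algebra.trace (ZMod p) F (ω * x))) x₀
    (fun x => ?_) (chi_ne_one p hx₀)
  show chi p (Algebra.trace (ZMod p) F (ω * (x + x₀))) = _
  rw [mul_add, map_add, chi_add, mul_comm]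

end TraceSum

lemma pow_inj (t : ℕ) (hco : Nat.gcd (t - 1) (p - 1) = 1) {a b : ZMod p}
    (ha : a ≠ 0) (hb : b ≠ 0) (h : a ^ (t - 1) = b ^ (t - 1)) : a = b := by
  have hcard : Nat.card (ZMod p)ˣ = p - 1 := by
    rw [Nat.card_eq_fintype_card, ZMod.card_units_eq_totient, Nat.totient_prime hp.out]
  have hcop : (Nat.card (ZMod p)ˣ).Coprime (t - 1) := by
    rw [hcard, Nat.coprime_comm]
    exact hco
  have key : (powCoprime hcop) (Units.mk0 a ha) = (powCoprime hcop) (Units.mk0 b hb) := by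
    ext
    simp [powCoprime, h]
  have := (powCoprime hcop).injective key
  have : a = (Units.mk0 b hb : ZMod p) := by rw [← this]; simp
  simpa using this

end Stmt9Aux
namespace Stmt9Aux
variable (p : ℕ) [hp : Fact p.Prime]

lemma ringChar_ne_two (hodd : Odd p) : ringChar (ZMod p) ≠ 2 := by
  rw [ZMod.ringChar_zmod_n]
  rintro rfl
  simp [Nat.odd_iff] at hodd

lemma two_mul_card_sq (hodd : Odd p) :
    (2 * (Finset.univ.filter fun j : ZMod p => quadraticChar (ZMod p) j = 1).card : ℤ)
      = (p : ℤ) - 1 := by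
  classical
  have hF2 := ringChar_ne_two p hodd
  set χ := quadraticChar (ZMod p) with hχ
  have hsum : ∑ a : ZMod p, (χ a : ℤ) = 0 := quadraticChar_sum_zero hF2
  set A := Finset.univ.filter fun j : ZMod p => χ j = 1 with hA
  set B := Finset.univ.filter fun j : ZMod p => χ j = -1 with hB
  have hsplit := Finset.sum_filter_add_sum_filter_not Finset.univ
    (fun j : ZMod p => χ j = 1) (fun a => (χ a : ℤ))
  have hsumA : ∑ a ∈ A, (χ a : ℤ) = A.card := by
    rw [Finset.sum_congr rfl (fun a ha => ((Finset.mem_filter.mp ha).2 : χ a = 1))]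
    simp
    rfl
  set C := Finset.univ.filter fun j : ZMod p => ¬ χ j = 1 with hC
  have hsplit2 := Finset.sum_filter_add_sum_filter_not C
    (fun j : ZMod p => χ j = -1) (fun a => (χ a : ℤ))
  have hCB : C.filter (fun j => χ j = -1) = B := by
    ext a
    simp only [hC, hB, Finset.mem_filter, Finset.mem_univ, true_and]
    constructor
    · rintro ⟨-, h⟩; exact h
    · intro h; exact ⟨by rw [h]; decide, h⟩
  have hsumB : ∑ a ∈ C.filter (fun j => χ j = -1), (χ a : ℤ) = -(B.card : ℤ) := by
    rw [hCB, Finset.sum_congr rfl (fun a ha => ((Finset.mem_filter.mp ha).2 : χ a = -1))]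
    simp
    rfl
  have hrest : ∑ a ∈ C.filter (fun j => ¬ χ j = -1), (χ a : ℤ) = 0 := by
    apply Finset.sum_eq_zero
    intro a ha
    simp only [hC, Finset.mem_filter, Finset.mem_univ, true_and] at ha
    obtain ⟨h1, h2⟩ := ha
    have ha0 : a = 0 := by
      by_contra h0
      rcases quadraticChar_dichotomy h0 with h | h
      · exact h1 h
      · exact h2 h
    rw [ha0]
    simp [hχ]
  have hAB : 0 = (A.card : ℤ) - B.card := by
    rw [← hsum, ← hsplit, hsumA, ← hsplit2, hsumB, hrest]
    ring
  have hABcard : (A.card : ℤ) + B.card = (p : ℤ) - 1 := by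
    have hdisj : Disjoint A B := by
      rw [Finset.disjoint_filter]
      intro a _ h1 h2
      rw [h1] at h2
      exact absurd h2 (by decide)
    have hunion : A ∪ B = Finset.univ.erase (0 : ZMod p) := by
      ext a
      simp only [Finset.mem_union, hA, hB, Finset.mem_filter, Finset.mem_univ, true_and,
        Finset.mem_erase, and_true]
      constructor
      · rintro (h | h) rfl <;> simp [hχ, quadraticChar_zero] at h
      · intro h; exact quadraticChar_dichotomy h
    have := Finset.card_union_of_disjoint hdisj
    rw [hunion, Finset.card_erase_of_mem (Finset.mem_univ _), Finset.card_univ,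
      ZMod.card] at this
    have hp1 : 1 ≤ p := hp.out.pos
    omega
  omega

lemma sqrtPstar_sq : sqrtPstar p ^ 2 = if p % 4 = 1 then (p : ℂ) else -(p : ℂ) := by
  have hp0 : (0:ℝ) ≤ (p:ℝ) := by positivity
  rw [sqrtPstar]
  split_ifs
  · rw [← Complex.ofReal_pow, Real.sq_sqrt hp0]; norm_cast
  · rw [mul_pow, Complex.I_sq, ← Complex.ofReal_pow, Real.sq_sqrt hp0]; push_cast; ring

lemma sqrtPstar_ne_zero : sqrtPstar p ≠ 0 := by
  have hppos : (0:ℝ) < p := by exact_mod_cast hp.out.pos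
  have h : (Real.sqrt p : ℂ) ≠ 0 := by
    simp only [ne_eq, Complex.ofReal_eq_zero]
    positivity
  rw [sqrtPstar]
  split_ifs
  · exact h
  · exact mul_ne_zero Complex.I_ne_zero h

lemma sqrtPstar_pow4 : sqrtPstar p ^ 4 = (p : ℂ) ^ 2 := by
  have := sqrtPstar_sq p
  have h4 : sqrtPstar p ^ 4 = (sqrtPstar p ^ 2) ^ 2 := by ring
  rw [h4, this]
  split_ifs <;> ring

lemma quadChar_pow_even (t : ℕ) (ht : Even t) {w : ZMod p} (hw : w ≠ 0) (k : ZMod p) :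
    quadraticChar (ZMod p) (w ^ t * k) = quadraticChar (ZMod p) k := by
  rw [map_mul, map_pow]
  obtain ⟨u, rfl⟩ := ht
  rw [← two_mul, pow_mul, quadraticChar_sq_one hw, one_pow, one_mul]

end Stmt9Aux
namespace Stmt9Aux
variable (p : ℕ) [hp : Fact p.Prime]

lemma fiber_sum {F : Type} [Fintype F] (g : F → ZMod p) (ψ : ZMod p → ℂ) :
    ∑ x : F, ψ (g x) = ∑ k : ZMod p,
      ((Finset.univ.filter fun x => g x = k).card : ℂ) * ψ k := by
  classical
  rw [← Finset.sum_fiberwise' Finset.univ g ψ]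
  apply Finset.sum_congr rfl
  intro k _
  rw [Finset.sum_const, nsmul_eq_mul]

lemma chi_sum_erase (c : ZMod p) :
    ∑ y ∈ Finset.univ.erase (0 : ZMod p), chi p (y * c)
      = (if c = 0 then (p : ℂ) else 0) - 1 := by
  have h := chi_sum p c
  rw [← Finset.add_sum_erase _ _ (Finset.mem_univ (0 : ZMod p)), zero_mul, chi_zero] at h
  linear_combination h

lemma card_erase_zero : (Finset.univ.erase (0 : ZMod p)).card = p - 1 := by
  rw [Finset.card_erase_of_mem (Finset.mem_univ _), Finset.card_univ, ZMod.card]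

end Stmt9Aux
namespace Stmt9Aux

lemma master0 (p m t : ℕ) [hp : Fact p.Prime] {F : Type} [Fintype F]
    (f T : F → ZMod p) (hcard : Fintype.card F = p ^ m)
    (hbal : ∑ x : F, chi p (f x) = 0)
    (hTz : ∀ z : ZMod p, z ≠ 0 → ∑ x : F, chi p (z * T x) = 0)
    (htpos : 0 < t) (htEven : Even t) (htco : Nat.gcd (t - 1) (p - 1) = 1)
    (hhom : ∀ w : ZMod p, w ≠ 0 → ∃ σ : Equiv.Perm F,
      ∀ x, f (σ x) = w ^ t * f x ∧ T (σ x) = w * T x) :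
    (p : ℂ) ^ 2 * ((Finset.univ.filter fun x : F =>
        quadraticChar (ZMod p) (f x) = 1 ∧ T x = 0).card : ℂ)
      = ((Finset.univ.filter fun j : ZMod p => quadraticChar (ZMod p) j = 1).card : ℂ)
          * (p : ℂ) ^ m * (2 - (p : ℂ))
        + (p : ℂ) * ((p : ℂ) - 1) *
          ∑ k ∈ Finset.univ.filter fun j : ZMod p => quadraticChar (ZMod p) j = 1,
            ((Finset.univ.filter fun x : F => f x - T x = k).card : ℂ) := by
  classical
  have hpC : (p : ℂ) ≠ 0 := Nat.cast_ne_zero.mpr hp.out.ne_zero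
  set SQs := Finset.univ.filter fun j : ZMod p => quadraticChar (ZMod p) j = 1 with hSQs
  set E0 := Finset.univ.erase (0 : ZMod p) with hE0
  set e : ZMod p → ℕ := fun k => (Finset.univ.filter fun x : F => f x - T x = k).card with he
  set c : ZMod p → ℕ := fun k => (Finset.univ.filter fun x : F => f x = k).card with hc
  -- count facts
  have hesum : ∑ k : ZMod p, (e k : ℂ) = (p : ℂ) ^ m := by
    have : ∑ k : ZMod p, e k = Fintype.card F := by
      rw [← Finset.card_univ]
      exact (Finset.card_eq_sum_card_fiberwise (fun x _ => Finset.mem_univ ((f x - T x)))).symm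
    calc ∑ k : ZMod p, (e k : ℂ) = ((∑ k : ZMod p, e k : ℕ) : ℂ) := by push_cast; rfl
      _ = (p : ℂ) ^ m := by rw [this, hcard]; push_cast; rfl
  -- balancedness of f : all fibers equal
  have hcc : ∀ k, (c k : ℂ) = (c 0 : ℂ) := by
    have h1 : ∑ k : ZMod p, ((c k : ℤ) : ℂ) * chi p k = 0 := by
      have h := fiber_sum p f (fun k => chi p k)
      rw [hbal] at h
      have h' : ∑ k : ZMod p, (c k : ℂ) * chi p k = 0 := h.symm
      exact_mod_cast h'
    have h3 := eq_of_sum_chi_eq_zero p (fun k => (c k : ℤ)) h1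
    intro k
    have h4 : (c k : ℤ) = (c 0 : ℤ) := h3 k
    exact_mod_cast h4
  -- vanishing of pure-f character sums
  have hY : ∀ y : ZMod p, y ≠ 0 → ∀ j : ZMod p,
      ∑ x : F, chi p (y * (f x - j)) = 0 := by
    intro y hy j
    have h1 : ∑ x : F, chi p (y * (f x - j))
        = ∑ k : ZMod p, (c k : ℂ) * chi p (y * (k - j)) :=
      fiber_sum p f (fun k => chi p (y * (k - j)))
    rw [h1]
    have h2 : ∑ k : ZMod p, (c k : ℂ) * chi p (y * (k - j))
        = (c 0 : ℂ) * ∑ k : ZMod p, chi p (y * (k - j)) := by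
      rw [Finset.mul_sum]
      exact Finset.sum_congr rfl fun k _ => by rw [hcc k]
    rw [h2]
    have h3 : ∑ k : ZMod p, chi p (y * (k - j)) = ∑ k : ZMod p, chi p (k * y) := by
      refine Fintype.sum_equiv (Equiv.subRight j) _ _ fun k => ?_
      simp only [Equiv.subRight_apply]
      congr 1
      ring
    rw [h3, chi_sum p y, if_neg hy, mul_zero]
  -- the main reindexing for y,z ≠ 0
  have hR : ∀ y ∈ E0, ∀ j : ZMod p,
      ∑ z ∈ E0, ∑ x : F, chi p (y * (f x - j) - z * T x)
        = ∑ w ∈ E0, ∑ k : ZMod p, (e k : ℂ) * chi p (y * (w ^ t * k - j)) := by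
    intro y hy j
    have hyne : y ≠ 0 := (Finset.mem_erase.mp hy).1
    have hsurj : ∀ u : ZMod p, u ≠ 0 → ∃ w : ZMod p, w ≠ 0 ∧ w ^ (t - 1) = u := by
      intro u hu
      have hcard : Nat.card (ZMod p)ˣ = p - 1 := by
        rw [Nat.card_eq_fintype_card, ZMod.card_units_eq_totient, Nat.totient_prime hp.out]
      have hcop : (Nat.card (ZMod p)ˣ).Coprime (t - 1) := by
        rw [hcard, Nat.coprime_comm]; exact htco
      set w : (ZMod p)ˣ := (powCoprime hcop).symm (Units.mk0 u hu) with hw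
      have hww : (powCoprime hcop) w = Units.mk0 u hu := Equiv.apply_symm_apply _ _
      refine ⟨(w : ZMod p), w.ne_zero, ?_⟩
      have : ((w ^ (t - 1) : (ZMod p)ˣ) : ZMod p) = u := by
        rw [show (w ^ (t - 1) : (ZMod p)ˣ) = (powCoprime hcop) w from rfl, hww]
        simp
      rw [← this]
      simp
    have stepA : ∑ z ∈ E0, ∑ x : F, chi p (y * (f x - j) - z * T x)
        = ∑ w ∈ E0, ∑ x : F, chi p (y * (f x - j) - (y * w ^ (t - 1)) * T x) := by
      refine (Finset.sum_bij (fun w _ => y * w ^ (t - 1)) ?_ ?_ ?_ ?_).symm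
      · intro w hw
        have hwne : w ≠ 0 := (Finset.mem_erase.mp hw).1
        exact Finset.mem_erase.mpr ⟨mul_ne_zero hyne (pow_ne_zero _ hwne), Finset.mem_univ _⟩
      · intro w1 hw1 w2 hw2 hww
        have h1 : w1 ≠ 0 := (Finset.mem_erase.mp hw1).1
        have h2 : w2 ≠ 0 := (Finset.mem_erase.mp hw2).1
        exact pow_inj p t htco h1 h2 (mul_left_cancel₀ hyne hww)
      · intro z hz
        have hzne : z ≠ 0 := (Finset.mem_erase.mp hz).1
        obtain ⟨w, hwne, hwz⟩ := hsurj (y⁻¹ * z) (mul_ne_zero (inv_ne_zero hyne) hzne)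
        refine ⟨w, Finset.mem_erase.mpr ⟨hwne, Finset.mem_univ _⟩, ?_⟩
        show y * w ^ (t - 1) = z
        rw [hwz]
        field_simp
      · intro w hw
        rfl
    rw [stepA]
    refine Finset.sum_congr rfl fun w hw => ?_
    have hwne : w ≠ 0 := (Finset.mem_erase.mp hw).1
    have hpow : w ^ (t - 1) * w = w ^ t := by
      rw [← pow_succ]
      congr 1
      omega
    obtain ⟨σ, hσ⟩ := hhom w hwne
    have stepB : ∑ x : F, chi p (y * (f x - j) - (y * w ^ (t - 1)) * T x)
        = ∑ x : F, chi p (y * (w ^ t * (f x - T x) - j)) := by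
      refine (Fintype.sum_equiv σ _ _ fun x => ?_).symm
      congr 1
      rw [(hσ x).1, (hσ x).2]
      linear_combination (y * T x) * hpow
    rw [stepB]
    exact fiber_sum p (fun x => f x - T x) (fun k => chi p (y * (w ^ t * k - j)))

  -- per-j evaluation
  have hj : ∀ j : ZMod p,
      (∑ y : ZMod p, ∑ z : ZMod p, ∑ x : F, chi p (y * (f x - j) - z * T x))
        = (p : ℂ) ^ m + ∑ y ∈ E0, ∑ w ∈ E0, ∑ k : ZMod p,
            (e k : ℂ) * chi p (y * (w ^ t * k - j)) := by
    intro j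
    rw [← Finset.add_sum_erase _ _ (Finset.mem_univ (0 : ZMod p))]
    have hy0 : ∑ z : ZMod p, ∑ x : F, chi p (0 * (f x - j) - z * T x) = (p : ℂ) ^ m := by
      rw [← Finset.add_sum_erase _ _ (Finset.mem_univ (0 : ZMod p))]
      have hz0 : ∑ x : F, chi p (0 * (f x - j) - 0 * T x) = (p : ℂ) ^ m := by
        have : ∀ x : F, chi p (0 * (f x - j) - 0 * T x) = 1 := by
          intro x
          rw [show (0 : ZMod p) * (f x - j) - 0 * T x = 0 by ring, chi_zero]
        rw [Finset.sum_congr rfl (fun x _ => this x), Finset.sum_const, Finset.card_univ,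
          hcard, nsmul_eq_mul, mul_one]
        push_cast
        rfl
      have hzrest : ∑ z ∈ Finset.univ.erase (0 : ZMod p), ∑ x : F,
          chi p (0 * (f x - j) - z * T x) = 0 := by
        apply Finset.sum_eq_zero
        intro z hz
        have hzne : z ≠ 0 := (Finset.mem_erase.mp hz).1
        have h := hTz (-z) (neg_ne_zero.mpr hzne)
        rw [← h]
        apply Finset.sum_congr rfl
        intro x _
        congr 1
        ring
      rw [hz0, hzrest, add_zero]
    rw [hy0]
    congr 1
    refine Finset.sum_congr rfl fun y hy => ?_
    have hyne := (Finset.mem_erase.mp hy).1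
    rw [← Finset.add_sum_erase _ _ (Finset.mem_univ (0 : ZMod p))]
    have hz0' : ∑ x : F, chi p (y * (f x - j) - 0 * T x) = 0 := by
      have h := hY y hyne j
      rw [← h]
      apply Finset.sum_congr rfl
      intro x _
      congr 1
      ring
    rw [hz0', zero_add]
    exact hR y hy j

  -- identification with the count
  have hLHS : ∑ j ∈ SQs, ∑ y : ZMod p, ∑ z : ZMod p, ∑ x : F,
      chi p (y * (f x - j) - z * T x)
      = (p : ℂ) ^ 2 * ((Finset.univ.filter fun x : F =>
          quadraticChar (ZMod p) (f x) = 1 ∧ T x = 0).card : ℂ) := by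
    have claim1 : ∀ j ∈ SQs, ∑ y : ZMod p, ∑ z : ZMod p, ∑ x : F,
        chi p (y * (f x - j) - z * T x)
        = ∑ x : F, (if f x = j then (p : ℂ) else 0) * (if T x = 0 then (p : ℂ) else 0) := by
      intro j _
      have h1 : ∀ y : ZMod p, ∑ z : ZMod p, ∑ x : F, chi p (y * (f x - j) - z * T x)
          = ∑ x : F, ∑ z : ZMod p, chi p (y * (f x - j) - z * T x) :=
        fun y => Finset.sum_comm
      rw [Finset.sum_congr rfl (fun y _ => h1 y), Finset.sum_comm]
      refine Finset.sum_congr rfl fun x _ => ?_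
      have h2 : ∀ y z : ZMod p, chi p (y * (f x - j) - z * T x)
          = chi p (y * (f x - j)) * chi p (z * (-T x)) := by
        intro y z
        rw [← chi_add]
        congr 1
        ring
      calc ∑ y : ZMod p, ∑ z : ZMod p, chi p (y * (f x - j) - z * T x)
          = ∑ y : ZMod p, ∑ z : ZMod p, chi p (y * (f x - j)) * chi p (z * (-T x)) :=
            Finset.sum_congr rfl fun y _ => Finset.sum_congr rfl fun z _ => h2 y z
        _ = (∑ y : ZMod p, chi p (y * (f x - j))) * (∑ z : ZMod p, chi p (z * (-T x))) :=
            (Finset.sum_mul_sum _ _ _ _).symm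
        _ = _ := by
            rw [chi_sum, chi_sum]
            congr 1
            · exact if_congr sub_eq_zero rfl rfl
            · exact if_congr neg_eq_zero rfl rfl
    rw [Finset.sum_congr rfl claim1, Finset.sum_comm]
    have h3 : ∀ x : F, ∑ j ∈ SQs, (if f x = j then (p : ℂ) else 0) *
        (if T x = 0 then (p : ℂ) else 0)
        = if (quadraticChar (ZMod p) (f x) = 1 ∧ T x = 0) then (p : ℂ) ^ 2 else 0 := by
      intro x
      rw [← Finset.sum_mul]
      have h4 : ∑ j ∈ SQs, (if f x = j then (p : ℂ) else 0)
          = if quadraticChar (ZMod p) (f x) = 1 then (p : ℂ) else 0 := by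
        rw [Finset.sum_ite_eq SQs (f x) (fun _ => (p : ℂ))]
        refine if_congr ?_ rfl rfl
        simp [hSQs]
      rw [h4]
      by_cases h5 : quadraticChar (ZMod p) (f x) = 1 <;> by_cases h6 : T x = 0 <;>
        simp [h5, h6] <;> ring
    rw [Finset.sum_congr rfl (fun x _ => h3 x), ← Finset.sum_filter, Finset.sum_const,
      nsmul_eq_mul]
    ring

  -- the M computation
  have hM : ∑ j ∈ SQs, ∑ y ∈ E0, ∑ w ∈ E0, ∑ k : ZMod p,
      (e k : ℂ) * chi p (y * (w ^ t * k - j))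
      = ((p : ℂ) - 1) * ((p : ℂ) * (∑ k ∈ SQs, (e k : ℂ))
          - (SQs.card : ℂ) * (p : ℂ) ^ m) := by
    have s1 : ∀ j : ZMod p, ∑ y ∈ E0, ∑ w ∈ E0, ∑ k : ZMod p,
        (e k : ℂ) * chi p (y * (w ^ t * k - j))
        = ∑ w ∈ E0, ∑ k : ZMod p, ∑ y ∈ E0, (e k : ℂ) * chi p (y * (w ^ t * k - j)) := by
      intro j
      rw [Finset.sum_comm]
      exact Finset.sum_congr rfl fun w _ => Finset.sum_comm
    rw [Finset.sum_congr rfl (fun j _ => s1 j), Finset.sum_comm]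
    have s2 : ∀ w ∈ E0, ∑ j ∈ SQs, ∑ k : ZMod p, ∑ y ∈ E0,
        (e k : ℂ) * chi p (y * (w ^ t * k - j))
        = (p : ℂ) * (∑ k ∈ SQs, (e k : ℂ)) - (SQs.card : ℂ) * (p : ℂ) ^ m := by
      intro w hw
      have hwne : w ≠ 0 := (Finset.mem_erase.mp hw).1
      rw [Finset.sum_comm]
      have s3 : ∀ k : ZMod p, ∑ j ∈ SQs, ∑ y ∈ E0, (e k : ℂ) * chi p (y * (w ^ t * k - j))
          = (e k : ℂ) * ((if quadraticChar (ZMod p) k = 1 then (p : ℂ) else 0)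
              - (SQs.card : ℂ)) := by
        intro k
        have s4 : ∀ j : ZMod p, ∑ y ∈ E0, (e k : ℂ) * chi p (y * (w ^ t * k - j))
            = (e k : ℂ) * ((if w ^ t * k - j = 0 then (p : ℂ) else 0) - 1) := by
          intro j
          rw [← Finset.mul_sum, hE0, chi_sum_erase]
        rw [Finset.sum_congr rfl (fun j _ => s4 j), ← Finset.mul_sum]
        congr 1
        rw [Finset.sum_sub_distrib, Finset.sum_const, nsmul_eq_mul, mul_one]
        congr 1
        have s5 : ∀ j ∈ SQs, (if w ^ t * k - j = 0 then (p : ℂ) else 0)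
            = (if w ^ t * k = j then (p : ℂ) else 0) := fun j _ => if_congr sub_eq_zero rfl rfl
        rw [Finset.sum_congr rfl s5, Finset.sum_ite_eq SQs (w ^ t * k) (fun _ => (p : ℂ))]
        refine if_congr ?_ rfl rfl
        rw [hSQs]
        simp only [Finset.mem_filter, Finset.mem_univ, true_and]
        rw [quadChar_pow_even p t htEven hwne k]
      rw [Finset.sum_congr rfl (fun k _ => s3 k)]
      have s6 : ∀ k : ZMod p, (e k : ℂ) * ((if quadraticChar (ZMod p) k = 1 then (p : ℂ) else 0)
            - (SQs.card : ℂ))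
          = (if quadraticChar (ZMod p) k = 1 then (p : ℂ) * (e k : ℂ) else 0)
            - (SQs.card : ℂ) * (e k : ℂ) := by
        intro k
        split_ifs <;> ring
      rw [Finset.sum_congr rfl (fun k _ => s6 k), Finset.sum_sub_distrib, ← Finset.mul_sum,
        hesum, ← Finset.sum_filter, ← hSQs, Finset.mul_sum]
    rw [Finset.sum_congr rfl s2, Finset.sum_const, hE0, card_erase_zero, nsmul_eq_mul]
    have : ((p - 1 : ℕ) : ℂ) = (p : ℂ) - 1 := by
      push_cast [Nat.cast_sub hp.out.pos]
      ring
    rw [this]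

  -- put it together
  have := hLHS
  rw [Finset.sum_congr rfl (fun j _ => hj j), Finset.sum_add_distrib, Finset.sum_const,
    hM, nsmul_eq_mul] at this
  rw [← this]
  ring

end Stmt9Aux

open Stmt9Aux

/-- Evaluation of `N_sq(ω) = #{x : f(x) ∈ SQ ∧ Tr(ωx) = 0}` for `f ∈ WRPB`:
the value off the Walsh support, and the values on the support when `m+s` is even. -/
theorem stmt9 (p m s : ℕ) [Fact p.Prime] (hodd : Odd p) (hm : 0 < m)
    (F : Type) [Field F] [Fintype F] [Algebra (ZMod p) F]
    (f : F → ZMod p) (ε : ℤ) (fstar : F → ZMod p)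
    (hf : IsWRPB p m s f ε fstar) :
    ∀ ω : F, ω ≠ 0 →
      (‖walsh p f ω‖ ^ 2 ≠ (p : ℝ) ^ (m + s) →
        (((Finset.univ.filter fun x : F =>
            quadraticChar (ZMod p) (f x) = 1 ∧ Algebra.trace (ZMod p) F (ω * x) = 0).card : ℂ) =
          ((p : ℂ) - 1) * (p : ℂ) ^ ((m : ℤ) - 2) / 2)) ∧
      (‖walsh p f ω‖ ^ 2 = (p : ℝ) ^ (m + s) → Even (m + s) →
        ((fstar ω = 0 ∨ quadraticChar (ZMod p) (fstar ω) = -1) →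
          (((Finset.univ.filter fun x : F =>
              quadraticChar (ZMod p) (f x) = 1 ∧
                Algebra.trace (ZMod p) F (ω * x) = 0).card : ℂ) =
            ((p : ℂ) - 1) / 2 * ((p : ℂ) ^ ((m : ℤ) - 2) -
              (ε : ℂ) * ((p : ℂ) - 1) * sqrtPstar p ^ ((m : ℤ) + (s : ℤ) - 4)))) ∧
        (quadraticChar (ZMod p) (fstar ω) = 1 →
          (((Finset.univ.filter fun x : F =>
              quadraticChar (ZMod p) (f x) = 1 ∧
                Algebra.trace (ZMod p) F (ω * x) = 0).card : ℂ) =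
            ((p : ℂ) - 1) / 2 * ((p : ℂ) ^ ((m : ℤ) - 2) +
              (ε : ℂ) * ((p : ℂ) + 1) * sqrtPstar p ^ ((m : ℤ) + (s : ℤ) - 4))))) := by
  classical
  intro ω hω
  obtain ⟨t, htEven, htpos, htco, hhomog⟩ := hf.homog
  have hpP : p.Prime := Fact.out
  have hpC : (p : ℂ) ≠ 0 := Nat.cast_ne_zero.mpr hpP.ne_zero
  have hbal0 : ∑ x : F, chi p (f x) = 0 := by
    have h := hf.balanced
    rw [walsh] at h
    rw [← h]
    apply Finset.sum_congr rfl
    intro x _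
    congr 1
    rw [zero_mul, map_zero, sub_zero]
  have halgInj : ∀ z : ZMod p, z ≠ 0 → algebraMap (ZMod p) F z ≠ 0 := by
    intro z hz h
    exact hz ((algebraMap (ZMod p) F).injective (by rw [h, map_zero]))
  have hTz : ∀ z : ZMod p, z ≠ 0 →
      ∑ x : F, chi p (z * Algebra.trace (ZMod p) F (ω * x)) = 0 := by
    intro z hz
    have halg : algebraMap (ZMod p) F z * ω ≠ 0 := mul_ne_zero (halgInj z hz) hω
    have h := trace_char_sum p (algebraMap (ZMod p) F z * ω) halg
    rw [← h]
    apply Finset.sum_congr rfl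
    intro x _
    congr 1
    rw [mul_assoc, ← Algebra.smul_def, map_smul, smul_eq_mul]
  have hhom : ∀ w : ZMod p, w ≠ 0 → ∃ σ : Equiv.Perm F, ∀ x : F,
      f (σ x) = w ^ t * f x ∧
      Algebra.trace (ZMod p) F (ω * σ x) = w * Algebra.trace (ZMod p) F (ω * x) := by
    intro w hw
    refine ⟨Equiv.mulLeft₀ (algebraMap (ZMod p) F w) (halgInj w hw), fun x => ⟨?_, ?_⟩⟩
    · exact hhomog w hw x
    · show Algebra.trace (ZMod p) F (ω * (algebraMap (ZMod p) F w * x)) = _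
      rw [show ω * (algebraMap (ZMod p) F w * x) = algebraMap (ZMod p) F w * (ω * x) by ring,
        ← Algebra.smul_def, map_smul, smul_eq_mul]
  have hmaster := master0 p m t f (fun x => Algebra.trace (ZMod p) F (ω * x)) hf.card_eq
    hbal0 hTz htpos htEven htco (fun w hw => by
      obtain ⟨σ, hσ⟩ := hhom w hw
      exact ⟨σ, fun x => hσ x⟩)
  set SQs := Finset.univ.filter fun j : ZMod p => quadraticChar (ZMod p) j = 1 with hSQs
  set e : ZMod p → ℕ := fun k =>
    (Finset.univ.filter fun x : F => f x - Algebra.trace (ZMod p) F (ω * x) = k).card with he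
  set N : ℕ := (Finset.univ.filter fun x : F =>
    quadraticChar (ZMod p) (f x) = 1 ∧ Algebra.trace (ZMod p) F (ω * x) = 0).card with hN
  have hmaster' : (p : ℂ) ^ 2 * (N : ℂ)
      = (SQs.card : ℂ) * (p : ℂ) ^ m * (2 - (p : ℂ))
        + (p : ℂ) * ((p : ℂ) - 1) * ∑ k ∈ SQs, (e k : ℂ) := hmaster
  have hAC : 2 * (SQs.card : ℂ) = (p : ℂ) - 1 := by
    have h := two_mul_card_sq p hodd
    exact_mod_cast h
  have hesum : ∑ k : ZMod p, (e k : ℂ) = (p : ℂ) ^ m := by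
    have h : ∑ k : ZMod p, e k = Fintype.card F := by
      rw [← Finset.card_univ]
      exact (Finset.card_eq_sum_card_fiberwise (fun x _ => Finset.mem_univ
        (f x - Algebra.trace (ZMod p) F (ω * x)))).symm
    calc ∑ k : ZMod p, (e k : ℂ) = ((∑ k : ZMod p, e k : ℕ) : ℂ) := by push_cast; rfl
      _ = (p : ℂ) ^ m := by rw [h, hf.card_eq]; push_cast; rfl
  have hwalsh : walsh p f ω = ∑ k : ZMod p, (e k : ℂ) * chi p k := by
    rw [walsh]
    exact fiber_sum p (fun x => f x - Algebra.trace (ZMod p) F (ω * x)) (chi p)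
  have hzpm : (p : ℂ) ^ ((m : ℤ) - 2) = (p : ℂ) ^ m / (p : ℂ) ^ 2 := by
    rw [zpow_sub₀ hpC, zpow_natCast, show ((2:ℤ)) = ((2:ℕ):ℤ) by norm_num, zpow_natCast]
  constructor
  · -- off the Walsh support
    intro hns
    have hw0 : walsh p f ω = 0 := by
      rcases hf.plateaued ω with h | h
      · exact norm_eq_zero.mp ((pow_eq_zero_iff (two_ne_zero)).mp h)
      · exact absurd h hns
    have h0 : ∑ k : ZMod p, ((e k : ℤ) : ℂ) * chi p k = 0 := by
      have h1 : ∑ k : ZMod p, (e k : ℂ) * chi p k = 0 := by rw [← hwalsh, hw0]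
      exact_mod_cast h1
    have hcc := eq_of_sum_chi_eq_zero p (fun k => (e k : ℤ)) h0
    have hccC : ∀ k, (e k : ℂ) = (e 0 : ℂ) := by
      intro k
      have h2 : (e k : ℤ) = (e 0 : ℤ) := hcc k
      exact_mod_cast h2
    have hpe : (p : ℂ) * (e 0 : ℂ) = (p : ℂ) ^ m := by
      rw [← hesum, Finset.sum_congr rfl (fun k _ => hccC k), Finset.sum_const,
        Finset.card_univ, ZMod.card, nsmul_eq_mul]
    have hE : ∑ k ∈ SQs, (e k : ℂ) = (SQs.card : ℂ) * (e 0 : ℂ) := by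
      rw [Finset.sum_congr rfl (fun k _ => hccC k), Finset.sum_const, nsmul_eq_mul]
    rw [hzpm]
    have hp2 : (p : ℂ) ^ 2 ≠ 0 := pow_ne_zero _ hpC
    field_simp
    linear_combination 2 * hmaster' + (2 * (p:ℂ) * ((p:ℂ) - 1)) * hE
      + (2 * ((p:ℂ) - 1) * (SQs.card : ℂ)) * hpe + ((p:ℂ)^m) * hAC
  · -- on the Walsh support
    intro hsup hEven
    have hwr := hf.weakly_regular ω hsup
    obtain ⟨u, hu⟩ := hEven
    set A₀ : ℤ := (if p % 4 = 1 then (p : ℤ) else -p) ^ u with hA₀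
    have hA₀C : (A₀ : ℂ) = sqrtPstar p ^ (m + s) := by
      rw [hA₀, hu, ← two_mul, pow_mul, sqrtPstar_sq p]
      split_ifs <;> push_cast <;> ring
    set eI : ZMod p → ℤ := fun k => (e k : ℤ) - (if k = fstar ω then ε * A₀ else 0) with heI
    have hsum0 : ∑ k : ZMod p, (eI k : ℂ) * chi p k = 0 := by
      have h5 : ∑ k : ZMod p, (if k = fstar ω then ((ε * A₀ : ℤ) : ℂ) else 0) * chi p k
          = ((ε * A₀ : ℤ) : ℂ) * chi p (fstar ω) := by
        rw [Finset.sum_eq_single (fstar ω)]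
        · rw [if_pos rfl]
        · intro k _ hk
          rw [if_neg hk, zero_mul]
        · intro hmem
          exact absurd (Finset.mem_univ _) hmem
      have h6 : ∀ k : ZMod p, (eI k : ℂ) * chi p k
          = (e k : ℂ) * chi p k - (if k = fstar ω then ((ε * A₀ : ℤ) : ℂ) else 0) * chi p k := by
        intro k
        rw [heI]
        push_cast
        split_ifs <;> push_cast <;> ring
      rw [Finset.sum_congr rfl (fun k _ => h6 k), Finset.sum_sub_distrib, h5, ← hwalsh, hwr,
        ← hA₀C]
      push_cast
      ring
    have hcc := eq_of_sum_chi_eq_zero p eI hsum0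
    have heIC : ∀ k, (eI k : ℂ) = (eI 0 : ℂ) := fun k => by exact_mod_cast hcc k
    have heC : ∀ k : ZMod p, (e k : ℂ)
        = (eI 0 : ℂ) + (if k = fstar ω then ((ε * A₀ : ℤ) : ℂ) else 0) := by
      intro k
      have h7 : (e k : ℂ) = (eI k : ℂ) + (if k = fstar ω then ((ε * A₀ : ℤ) : ℂ) else 0) := by
        rw [heI]
        push_cast
        split_ifs <;> push_cast <;> ring
      rw [h7, heIC k]
    have hpe : (p : ℂ) * (eI 0 : ℂ) + ((ε * A₀ : ℤ) : ℂ) = (p : ℂ) ^ m := by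
      rw [← hesum, Finset.sum_congr rfl (fun k _ => heC k), Finset.sum_add_distrib,
        Finset.sum_const, Finset.card_univ, ZMod.card, nsmul_eq_mul]
      congr 1
      rw [Finset.sum_ite_eq' Finset.univ (fstar ω) (fun _ => ((ε * A₀ : ℤ) : ℂ))]
      rw [if_pos (Finset.mem_univ _)]
    have hEval : ∑ k ∈ SQs, (e k : ℂ) = (SQs.card : ℂ) * (eI 0 : ℂ)
        + (if quadraticChar (ZMod p) (fstar ω) = 1 then ((ε * A₀ : ℤ) : ℂ) else 0) := by
      rw [Finset.sum_congr rfl (fun k _ => heC k), Finset.sum_add_distrib, Finset.sum_const,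
        nsmul_eq_mul]
      congr 1
      rw [Finset.sum_ite_eq' SQs (fstar ω) (fun _ => ((ε * A₀ : ℤ) : ℂ))]
      refine if_congr ?_ rfl rfl
      rw [hSQs]
      simp [Finset.mem_filter]
    have hzp4 : sqrtPstar p ^ ((m : ℤ) + (s : ℤ) - 4) = (A₀ : ℂ) / (p : ℂ) ^ 2 := by
      have h6 : (m : ℤ) + (s : ℤ) - 4 = ((m + s : ℕ) : ℤ) - (4 : ℤ) := by push_cast; ring
      rw [h6, zpow_sub₀ (sqrtPstar_ne_zero p), zpow_natCast, ← hA₀C]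
      have h7 : sqrtPstar p ^ (4 : ℤ) = (p : ℂ) ^ 2 := by
        rw [show (4:ℤ) = ((4:ℕ):ℤ) by norm_num, zpow_natCast, sqrtPstar_pow4 p]
      rw [h7]
    have hp2 : (p : ℂ) ^ 2 ≠ 0 := pow_ne_zero _ hpC
    have hBcast : ((ε * A₀ : ℤ) : ℂ) = (ε : ℂ) * (A₀ : ℂ) := by push_cast; ring
    rw [hBcast] at hpe hEval
    constructor
    · intro hcase
      have hχ : ¬ quadraticChar (ZMod p) (fstar ω) = 1 := by
        rcases hcase with h | h
        · rw [h, quadraticChar_zero]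
          norm_num
        · rw [h]
          norm_num
      rw [if_neg hχ, add_zero] at hEval
      rw [hzpm, hzp4]
      field_simp
      push_cast
      linear_combination 2 * hmaster' + (2 * (p:ℂ) * ((p:ℂ) - 1)) * hEval
        + (2 * ((p:ℂ) - 1) * (SQs.card : ℂ)) * hpe
        + ((p:ℂ)^m - ((p:ℂ)-1) * (ε:ℂ) * (A₀:ℂ)) * hAC
    · intro hcase
      rw [if_pos hcase] at hEval
      rw [hzpm, hzp4]
      field_simp
      push_cast
      linear_combination 2 * hmaster' + (2 * (p:ℂ) * ((p:ℂ) - 1)) * hEval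
        + (2 * ((p:ℂ) - 1) * (SQs.card : ℂ)) * hpe
        + ((p:ℂ)^m + ((p:ℂ)+1) * (ε:ℂ) * (A₀:ℂ)) * hAC
        - (2*(p:ℂ)*(ε:ℂ)*(A₀:ℂ)) * hAC
end
end

section
/- Let C be a linear code over F_p with minimum nonzero-codeword weight w_min and maximum weight w_max. If (p−1)/p < w_min/w_max, then C is minimal, i.e. every nonzero codeword u covers only its scalar multiples: if supp(v) ⊆ supp(u) for nonzero v ∈ C, then v = cu for some c ∈ F_p. -/
open scoped BigOperators Classical

/-- Ashikhmin–Barg: if `(p-1)/p < w_min/w_max` then the linear code `C ⊆ F_p^n` is minimal: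
every nonzero codeword covers only its scalar multiples. -/
theorem stmt13 (p n : ℕ) [Fact p.Prime] (C : Submodule (ZMod p) (Fin n → ZMod p))
    (wmin wmax : ℕ)
    (hmin : ∀ v ∈ C, v ≠ 0 → wmin ≤ (Finset.univ.filter fun i => v i ≠ 0).card)
    (hmax : ∀ v ∈ C, (Finset.univ.filter fun i => v i ≠ 0).card ≤ wmax)
    (hcond : ((p : ℝ) - 1) / p < (wmin : ℝ) / wmax) :
    ∀ u ∈ C, u ≠ 0 → ∀ v ∈ C, v ≠ 0 →
      (∀ i : Fin n, v i ≠ 0 → u i ≠ 0) → ∃ c : ZMod p, v = c • u := by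
  intro u hu hu0 v hv hv0 hsupp
  by_contra hcon
  push_neg at hcon
  set S := Finset.univ.filter (fun i => u i ≠ 0) with hS
  have hSmax : S.card ≤ wmax := hmax u hu
  have hSpos : 0 < S.card := by
    rcases Function.ne_iff.mp hu0 with ⟨i, hi⟩
    exact Finset.card_pos.mpr ⟨i, by simp only [hS, Finset.mem_filter, Finset.mem_univ, true_and]; simpa using hi⟩
  have hne : ∀ c : ZMod p, v - c • u ≠ 0 := by
    intro c h
    exact hcon c (sub_eq_zero.mp h)
  set f : Fin n → ZMod p := fun i => v i / u i with hf
  -- for each c, weight of v - c•u plus the fiber of f at c equals |S|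
  have key : ∀ c : ZMod p,
      (Finset.univ.filter fun i => (v - c • u) i ≠ 0).card
        + (S.filter fun i => f i = c).card = S.card := by
    intro c
    have h1 : (Finset.univ.filter fun i => (v - c • u) i ≠ 0)
        = S.filter (fun i => ¬ (f i = c)) := by
      ext i
      simp only [Finset.mem_filter, Finset.mem_univ, true_and, hS, hf,
        Pi.sub_apply, Pi.smul_apply, smul_eq_mul]
      constructor
      · intro h
        have hui : u i ≠ 0 := by
          intro hui
          have hvi : v i = 0 := by
            by_contra hvi; exact (hsupp i hvi) hui
          exact h (by simp [hvi, hui])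
        refine ⟨hui, ?_⟩
        intro hfc
        rw [div_eq_iff hui] at hfc
        exact h (by rw [hfc]; ring)
      · rintro ⟨hui, hfc⟩ h
        exact hfc ((div_eq_iff hui).mpr (by rw [sub_eq_zero] at h; exact h))
    rw [h1, add_comm, Finset.card_filter_add_card_filter_not]
  -- sum of fiber sizes is |S|
  have hfib : ∑ c : ZMod p, (S.filter fun i => f i = c).card = S.card :=
    (Finset.card_eq_sum_card_fiberwise (fun i _ => Finset.mem_univ (f i))).symm
  -- each v - c•u is a nonzero codeword, so has weight ≥ wmin
  have hwt : ∀ c : ZMod p,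
      wmin ≤ (Finset.univ.filter fun i => (v - c • u) i ≠ 0).card := by
    intro c
    exact hmin _ (sub_mem hv (Submodule.smul_mem C c hu)) (hne c)
  have hsum : p * wmin + S.card ≤ p * S.card := by
    have h2 : ∑ c : ZMod p, ((Finset.univ.filter fun i => (v - c • u) i ≠ 0).card
        + (S.filter fun i => f i = c).card) = p * S.card := by
      rw [Finset.sum_congr rfl (fun c _ => key c)]
      simp [Finset.card_univ, ZMod.card]
    rw [Finset.sum_add_distrib, hfib] at h2
    have h3 : p * wmin ≤ ∑ c : ZMod p,
        (Finset.univ.filter fun i => (v - c • u) i ≠ 0).card := by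
      calc p * wmin = ∑ _c : ZMod p, wmin := by
            simp [Finset.card_univ, ZMod.card, mul_comm]
        _ ≤ _ := Finset.sum_le_sum (fun c _ => hwt c)
    omega
  -- derive the numeric contradiction over ℝ
  have hp : 0 < p := (Fact.out : p.Prime).pos
  have hwmax : 0 < wmax := lt_of_lt_of_le hSpos hSmax
  have hR : ((p : ℝ) - 1) * wmax < p * wmin := by
    rw [div_lt_div_iff₀ (by exact_mod_cast hp) (by exact_mod_cast hwmax)] at hcond
    linarith
  have hsumR : (p : ℝ) * wmin + S.card ≤ p * S.card := by exact_mod_cast hsum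
  have hSmaxR : (S.card : ℝ) ≤ wmax := by exact_mod_cast hSmax
  have hpR : (1 : ℝ) ≤ p := by exact_mod_cast hp
  nlinarith [hsumR, hSmaxR, hR, hpR]
end
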